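/- arXiv:2509.18766 — 6 statements merged into one kernel-verified Lean document; each statement's English description precedes it below -/
import Mathlib

section
/- Let $A \in \mathbb{R}^{d\times k}$. There exists a constant $C > 0$ depending only on $A$ such that: for every $y$ of the form $y = Au$ with $u \in \mathbb{R}^k$, $u \geq 0$, there exists $x \in \mathbb{R}^k$ with $x \geq 0$, $Ax = y$, and $\|x\| \leq C\|y\|$. -/
open Matrix Finset

/-- Euclidean norm on `Fin n → ℝ`. -/
noncomputable def enorm₂ {n : ℕ} (x : Fin n → ℝ) : ℝ := Real.sqrt (∑ i, x i ^ 2)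

lemma enorm_eq_norm {n : ℕ} (x : Fin n → ℝ) :
    enorm₂ x = ‖(WithLp.equiv 2 (Fin n → ℝ)).symm x‖ := by
  rw [EuclideanSpace.norm_eq]
  simp [enorm₂, Real.norm_eq_abs, sq_abs]

lemma mulVec_eq_sum_cols {d k : ℕ} (A : Matrix (Fin d) (Fin k) ℝ) (x : Fin k → ℝ) :
    A.mulVec x = ∑ i, x i • (fun j => A j i) := by
  funext j
  simp [Matrix.mulVec, dotProduct, mul_comm]

lemma mulVec_eq_sum_subtype {d k : ℕ} (A : Matrix (Fin d) (Fin k) ℝ) (s : Finset (Fin k))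
    (x : Fin k → ℝ) (hx : ∀ i ∉ s, x i = 0) :
    A.mulVec x = ∑ i : s, x (i : Fin k) • (fun j => A j (i : Fin k)) := by
  rw [mulVec_eq_sum_cols]
  rw [show (∑ i : s, x (i : Fin k) • (fun j => A j (i : Fin k)))
      = ∑ i ∈ s, x i • (fun j => A j i) from
      Finset.sum_coe_sort s (fun i => x i • (fun j => A j i))]
  exact (Finset.sum_subset (Finset.subset_univ s) (by intro i _ hi; simp [hx i hi])).symm

lemma bound_of_indep {d k : ℕ} (A : Matrix (Fin d) (Fin k) ℝ) (s : Finset (Fin k))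
    (hs : LinearIndependent ℝ (fun i : s => (fun j => A j (i : Fin k)))) :
    ∃ C : ℝ, 0 ≤ C ∧ ∀ x : Fin k → ℝ, (∀ i ∉ s, x i = 0) →
      enorm₂ x ≤ C * enorm₂ (A.mulVec x) := by
  classical
  set ext : (s → ℝ) → (Fin k → ℝ) :=
    fun w i => if h : i ∈ s then w ⟨i, h⟩ else 0 with hext
  have hext_zero : ∀ w : s → ℝ, ∀ i ∉ s, ext w i = 0 := by
    intro w i hi; simp [hext, hi]
  have hext_mem : ∀ w : s → ℝ, ∀ i : s, ext w (i : Fin k) = w i := by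
    intro w i; simp [hext, i.2]
  set L : EuclideanSpace ℝ s →ₗ[ℝ] EuclideanSpace ℝ (Fin d) :=
    { toFun := fun w => (WithLp.equiv 2 (Fin d → ℝ)).symm
        (A.mulVec (ext ((WithLp.equiv 2 (s → ℝ)) w)))
      map_add' := by
        intro w w'
        have : ext ((WithLp.equiv 2 (s → ℝ)) (w + w'))
            = ext ((WithLp.equiv 2 (s → ℝ)) w) + ext ((WithLp.equiv 2 (s → ℝ)) w') := by
          funext i
          by_cases h : i ∈ s <;> simp [hext, h]
        simp only [this, Matrix.mulVec_add]
        rfl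
      map_smul' := by
        intro c w
        have : ext ((WithLp.equiv 2 (s → ℝ)) (c • w))
            = c • ext ((WithLp.equiv 2 (s → ℝ)) w) := by
          funext i
          by_cases h : i ∈ s <;> simp [hext, h]
        simp only [this, Matrix.mulVec_smul]
        rfl } with hL
  have hinj : Function.Injective L := by
    rw [← LinearMap.ker_eq_bot, LinearMap.ker_eq_bot']
    intro w hw
    have h0 : A.mulVec (ext ((WithLp.equiv 2 (s → ℝ)) w)) = 0 := by
      have := congrArg (WithLp.equiv 2 (Fin d → ℝ)) hw
      simpa [hL] using this
    rw [mulVec_eq_sum_subtype A s _ (hext_zero _)] at h0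
    have := Fintype.linearIndependent_iff.mp hs (fun i => ext ((WithLp.equiv 2 (s → ℝ)) w) i)
      h0
    ext i
    have hi := this i
    simp only [hext_mem] at hi
    simpa using hi
  set e := (LinearEquiv.ofInjective L hinj).toContinuousLinearEquiv with he
  refine ⟨‖(e.symm : LinearMap.range L →L[ℝ] EuclideanSpace ℝ s)‖, ContinuousLinearMap.opNorm_nonneg _, ?_⟩
  intro x hx
  set w : EuclideanSpace ℝ s := (WithLp.equiv 2 (s → ℝ)).symm (fun i => x i) with hw
  have hextw : ext ((WithLp.equiv 2 (s → ℝ)) w) = x := by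
    funext i
    by_cases h : i ∈ s
    · simp [hext, h, hw]
    · simp [hext, h, hx i h]
  have h1 : enorm₂ x = ‖w‖ := by
    rw [EuclideanSpace.norm_eq, enorm₂]
    congr 1
    rw [show (∑ i : s, ‖w i‖ ^ 2) = ∑ i ∈ s, ‖x i‖ ^ 2 from
      Finset.sum_coe_sort s (fun i => ‖x i‖ ^ 2)]
    rw [← Finset.sum_subset (Finset.subset_univ s)
      (by intro i _ hi; simp [hx i hi])]
    simp [Real.norm_eq_abs, sq_abs]
  have h2 : ‖(L w : EuclideanSpace ℝ (Fin d))‖ = enorm₂ (A.mulVec x) := by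
    rw [enorm_eq_norm]
    congr 1
    simp [hL]
    exact congrArg A.mulVec hextw
  have h3 : ‖w‖ ≤ ‖(e.symm : LinearMap.range L →L[ℝ] EuclideanSpace ℝ s)‖ * ‖e w‖ := by
    calc ‖w‖ = ‖e.symm (e w)‖ := by rw [ContinuousLinearEquiv.symm_apply_apply]
    _ ≤ _ := (e.symm : LinearMap.range L →L[ℝ] EuclideanSpace ℝ s).le_opNorm (e w)
  have h4 : ‖e w‖ = ‖(L w : EuclideanSpace ℝ (Fin d))‖ := by
    rw [he]
    rw [show ((LinearEquiv.ofInjective L hinj).toContinuousLinearEquiv w : LinearMap.range L)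
      = LinearEquiv.ofInjective L hinj w from rfl]
    rw [show ‖LinearEquiv.ofInjective L hinj w‖
      = ‖((LinearEquiv.ofInjective L hinj w : LinearMap.range L) : EuclideanSpace ℝ (Fin d))‖ from rfl]
    congr 1
  rw [h1, ← h2, ← h4]
  exact h3

lemma caratheodory_cone {d k : ℕ} (A : Matrix (Fin d) (Fin k) ℝ) (u : Fin k → ℝ) (hu : 0 ≤ u) :
    ∃ x : Fin k → ℝ, 0 ≤ x ∧ A.mulVec x = A.mulVec u ∧
      ∃ s : Finset (Fin k), (∀ i ∉ s, x i = 0) ∧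
        LinearIndependent ℝ (fun i : s => (fun j => A j (i : Fin k))) := by
  classical
  suffices H : ∀ n : ℕ, ∀ u : Fin k → ℝ, 0 ≤ u →
      (univ.filter (fun i => u i ≠ 0)).card ≤ n →
      ∃ x : Fin k → ℝ, 0 ≤ x ∧ A.mulVec x = A.mulVec u ∧
        ∃ s : Finset (Fin k), (∀ i ∉ s, x i = 0) ∧
          LinearIndependent ℝ (fun i : s => (fun j => A j (i : Fin k))) by
    exact H _ u hu le_rfl
  intro n
  induction n with
  | zero =>
    intro u hu hcard
    have hzero : ∀ i, u i = 0 := by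
      intro i
      by_contra h
      have : i ∈ univ.filter (fun i => u i ≠ 0) := by simp [h]
      have := Finset.card_pos.mpr ⟨i, this⟩
      omega
    refine ⟨u, hu, rfl, ∅, fun i _ => hzero i, ?_⟩
    haveI : IsEmpty ((∅ : Finset (Fin k)) : Type) := Finset.isEmpty_coe_sort.mpr rfl
    exact linearIndependent_empty_type
  | succ n ih =>
    intro u hu hcard
    set s : Finset (Fin k) := univ.filter (fun i => u i ≠ 0) with hs
    have hmem : ∀ i, i ∈ s ↔ u i ≠ 0 := by intro i; simp [hs]
    by_cases hind : LinearIndependent ℝ (fun i : s => (fun j => A j (i : Fin k)))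
    · exact ⟨u, hu, rfl, s, fun i hi => by simpa using (hmem i).not.mp hi, hind⟩
    · -- get a nontrivial kernel vector supported on s with a positive coordinate
      have key : ∃ c : Fin k → ℝ, A.mulVec c = 0 ∧ (∀ i, u i = 0 → c i = 0) ∧ ∃ i, 0 < c i := by
        obtain ⟨g, hg0, j, hgj⟩ := Fintype.not_linearIndependent_iff.mp hind
        set c : Fin k → ℝ := fun i => if h : i ∈ s then g ⟨i, h⟩ else 0 with hc
        have hcs : ∀ i ∉ s, c i = 0 := by intro i hi; simp [hc, hi]
        have hcmem : ∀ i : s, c (i : Fin k) = g i := by intro i; simp [hc, i.2]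
        have hc0 : A.mulVec c = 0 := by
          rw [mulVec_eq_sum_subtype A s c hcs]
          simp only [hcmem]
          exact hg0
        have hcsupp : ∀ i, u i = 0 → c i = 0 := by
          intro i hi
          exact hcs i (by simp [hmem, hi])
        have hcj : c (j : Fin k) ≠ 0 := by rw [hcmem]; exact hgj
        rcases hcj.lt_or_gt with h | h
        · refine ⟨-c, by simp [Matrix.mulVec_neg, hc0], fun i hi => by simp [hcsupp i hi], j, ?_⟩
          simpa using h
        · exact ⟨c, hc0, hcsupp, j, h⟩
      obtain ⟨c, hc0, hcsupp, i₁, hc1⟩ := key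
      obtain ⟨i₀, hi₀I, hmin⟩ := Finset.exists_min_image (univ.filter (fun i => 0 < c i))
        (fun i => u i / c i) ⟨i₁, by simp [hc1]⟩
      have hci₀ : 0 < c i₀ := by simpa using hi₀I
      set t : ℝ := u i₀ / c i₀ with htdef
      have ht : 0 ≤ t := div_nonneg (hu i₀) hci₀.le
      set x : Fin k → ℝ := fun i => u i - t * c i with hx
      have hx0 : 0 ≤ x := by
        intro i
        by_cases h : 0 < c i
        · have := hmin i (by simp [h])
          have : t * c i ≤ u i := by
            rw [← le_div_iff₀ h]
            exact this
          simpa [hx] using this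
        · push_neg at h
          have : t * c i ≤ 0 := mul_nonpos_of_nonneg_of_nonpos ht h
          have := sub_nonneg.mpr (this.trans (hu i))
          simpa [hx] using this
      have hAx : A.mulVec x = A.mulVec u := by
        have : x = u - t • c := by funext i; simp [hx]
        rw [this, Matrix.mulVec_sub, Matrix.mulVec_smul, hc0]
        simp
      have hxi₀ : x i₀ = 0 := by
        simp only [hx, htdef]
        field_simp
        ring
      have hui₀ : u i₀ ≠ 0 := by
        intro h
        exact hci₀.ne' (hcsupp i₀ h)
      have hsub : univ.filter (fun i => x i ≠ 0) ⊆ s.erase i₀ := by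
        intro i hi
        simp only [mem_filter, mem_univ, true_and] at hi
        refine Finset.mem_erase.mpr ⟨?_, ?_⟩
        · intro h; subst h; exact hi hxi₀
        · rw [hmem]
          intro h
          exact hi (by simp [hx, hcsupp i h, h])
      have hcard' : (univ.filter (fun i => x i ≠ 0)).card ≤ n := by
        have h1 := Finset.card_le_card hsub
        have h2 : (s.erase i₀).card = s.card - 1 :=
          Finset.card_erase_of_mem ((hmem i₀).mpr hui₀)
        omega
      obtain ⟨x', hx', hAx', s', hs'z, hs'ind⟩ := ih x hx0 hcard'
      exact ⟨x', hx', hAx'.trans hAx, s', hs'z, hs'ind⟩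

/-- There is a constant `C = C(A) > 0` such that any `y = Au` with `u ≥ 0` admits a
nonnegative solution `x` of `Ax = y` with `‖x‖ ≤ C‖y‖`. -/
theorem stmt_1 {d k : ℕ} (A : Matrix (Fin d) (Fin k) ℝ) :
    ∃ C > 0, ∀ u : Fin k → ℝ, 0 ≤ u →
      ∃ x : Fin k → ℝ, 0 ≤ x ∧ A.mulVec x = A.mulVec u ∧
        enorm₂ x ≤ C * enorm₂ (A.mulVec u) := by
  classical
  have hC : ∀ s : Finset (Fin k), ∃ C : ℝ, 0 ≤ C ∧
      (LinearIndependent ℝ (fun i : s => (fun j => A j (i : Fin k))) →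
        ∀ x : Fin k → ℝ, (∀ i ∉ s, x i = 0) → enorm₂ x ≤ C * enorm₂ (A.mulVec x)) := by
    intro s
    by_cases h : LinearIndependent ℝ (fun i : s => (fun j => A j (i : Fin k)))
    · obtain ⟨C, hC0, hC⟩ := bound_of_indep A s h
      exact ⟨C, hC0, fun _ => hC⟩
    · exact ⟨0, le_rfl, fun h' => absurd h' h⟩
  choose f hf0 hf using hC
  refine ⟨1 + ∑ s : Finset (Fin k), f s,
    add_pos_of_pos_of_nonneg one_pos (Finset.sum_nonneg fun s _ => hf0 s), ?_⟩
  intro u hu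
  obtain ⟨x, hx0, hAx, s, hsz, hsind⟩ := caratheodory_cone A u hu
  refine ⟨x, hx0, hAx, ?_⟩
  have h1 : enorm₂ x ≤ f s * enorm₂ (A.mulVec x) := hf s hsind x hsz
  rw [hAx] at h1
  refine h1.trans (mul_le_mul_of_nonneg_right ?_ (Real.sqrt_nonneg _))
  have : f s ≤ ∑ s : Finset (Fin k), f s :=
    Finset.single_le_sum (fun s _ => hf0 s) (Finset.mem_univ s)
  linarith
end

section
/- Let $M \in \mathbb{R}^{d\times d}$ be positive semidefinite, $q \in \mathbb{R}^d$. If $(v,x)$ and $(v',x')$ both satisfy the linear complementarity conditions $v = q + Mx$, $v \geq 0$, $x \geq 0$, $\langle v, x\rangle = 0$ and $v' = q + Mx'$, $v' \geq 0$, $x' \geq 0$, $\langle v', x'\rangle = 0$, then $v = v'$. -/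
open Matrix

/-- Uniqueness of the `v`-component of an LCP with positive semidefinite matrix. -/
theorem stmt_3 {d : ℕ} (M : Matrix (Fin d) (Fin d) ℝ) (hM : M.PosSemidef) (q : Fin d → ℝ)
    (v x v' x' : Fin d → ℝ)
    (h1 : v = q + M.mulVec x) (h2 : 0 ≤ v) (h3 : 0 ≤ x) (h4 : v ⬝ᵥ x = 0)
    (h1' : v' = q + M.mulVec x') (h2' : 0 ≤ v') (h3' : 0 ≤ x') (h4' : v' ⬝ᵥ x' = 0) :
    v = v' := by
  set z := x - x' with hz
  have hMz : M.mulVec z = v - v' := by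
    rw [hz, mulVec_sub, h1, h1']; abel
  have hq : z ⬝ᵥ M.mulVec z = -(v' ⬝ᵥ x) - (v ⬝ᵥ x') := by
    rw [hMz, hz]
    simp [dotProduct_sub, sub_dotProduct, dotProduct_comm x v, dotProduct_comm x' v',
      dotProduct_comm x v', dotProduct_comm x' v, h4, h4']
    ring
  have hvx' : 0 ≤ v ⬝ᵥ x' := dotProduct_nonneg_of_nonneg h2 h3'
  have hv'x : 0 ≤ v' ⬝ᵥ x := dotProduct_nonneg_of_nonneg h2' h3
  have hle : z ⬝ᵥ M.mulVec z ≤ 0 := by rw [hq]; linarith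
  have hge : 0 ≤ z ⬝ᵥ M.mulVec z := hM.dotProduct_mulVec_nonneg z
  have hzero : z ⬝ᵥ M.mulVec z = 0 := le_antisymm hle hge
  have : M.mulVec z = 0 := by
    have := (hM.dotProduct_mulVec_zero_iff z).mp (by simpa using hzero)
    exact this
  have : v - v' = 0 := by rw [← hMz]; exact this
  funext i
  have := congrFun this i
  simp [Pi.sub_apply, sub_eq_zero] at this
  exact this
end

section
/- Let $M \in \mathbb{R}^{d\times d}$ be positive semidefinite and $r \in \mathrm{span}(M)$. For each $s \geq 0$, let $(w(s), z(s))$ solve the parametric LCP: $w(s) = -sr + \mathbf{1} + Mz(s)$, $w(s) \geq 0$, $z(s) \geq 0$, $\langle w(s), z(s)\rangle = 0$. Then for any $s, s' \geq 0$: $w(s) - w(s') \in \mathrm{span}(M)$ and $\|w(s) - w(s')\|_{M^\dagger} \leq |s - s'| \cdot \|r\|_{M^\dagger}$. In particular $s \mapsto w(s)$ is Lipschitz continuous. -/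
open Matrix

/-- Lipschitz estimate in the `M†`-seminorm for the `w`-component of the parametric LCP.
`Mdag` is the Moore–Penrose pseudoinverse of `M`, specified by the four Penrose conditions. -/
theorem stmt_5 {d : ℕ} (M Mdag : Matrix (Fin d) (Fin d) ℝ) (hM : M.PosSemidef)
    (hp1 : M * Mdag * M = M) (hp2 : Mdag * M * Mdag = Mdag)
    (hp3 : (M * Mdag)ᵀ = M * Mdag) (hp4 : (Mdag * M)ᵀ = Mdag * M)
    (r : Fin d → ℝ) (hr : ∃ c, M.mulVec c = r)
    (w z : ℝ → Fin d → ℝ)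
    (hlcp : ∀ s : ℝ, 0 ≤ s →
      w s = -(s • r) + 1 + M.mulVec (z s) ∧ 0 ≤ w s ∧ 0 ≤ z s ∧ w s ⬝ᵥ z s = 0) :
    ∀ s s' : ℝ, 0 ≤ s → 0 ≤ s' →
      (∃ c, M.mulVec c = w s - w s') ∧
      Real.sqrt ((w s - w s') ⬝ᵥ Mdag.mulVec (w s - w s')) ≤
        |s - s'| * Real.sqrt (r ⬝ᵥ Mdag.mulVec r) := by
  obtain ⟨c, hc⟩ := hr
  have hMt : Mᵀ = M := by
    have := hM.1
    simpa [Matrix.IsHermitian, conjTranspose_eq_transpose_of_trivial] using this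
  -- symmetry of the bilinear form of M
  have hsym : ∀ x y : Fin d → ℝ, x ⬝ᵥ M *ᵥ y = y ⬝ᵥ M *ᵥ x := by
    intro x y
    rw [dotProduct_mulVec, ← vecMul_transpose, hMt, dotProduct_comm]
  have hpos : ∀ x : Fin d → ℝ, 0 ≤ x ⬝ᵥ M *ᵥ x := fun x => by
    simpa using hM.dotProduct_mulVec_nonneg x
  -- key reduction: the M† form on range(M) equals the M form
  have hkey : ∀ e f : Fin d → ℝ, (M *ᵥ e) ⬝ᵥ Mdag *ᵥ (M *ᵥ f) = e ⬝ᵥ M *ᵥ f := by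
    intro e f
    rw [mulVec_mulVec, dotProduct_mulVec, ← vecMul_transpose (x := e), vecMul_vecMul,
      hMt, ← mul_assoc, hp1, ← dotProduct_mulVec]
  -- Cauchy–Schwarz for the PSD form of M
  have hcs : ∀ x y : Fin d → ℝ, (x ⬝ᵥ M *ᵥ y) ^ 2 ≤ (x ⬝ᵥ M *ᵥ x) * (y ⬝ᵥ M *ᵥ y) := by
    intro x y
    have hq : ∀ t : ℝ, 0 ≤ (y ⬝ᵥ M *ᵥ y) * (t * t) + (2 * (x ⬝ᵥ M *ᵥ y)) * t
        + (x ⬝ᵥ M *ᵥ x) := by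
      intro t
      have h0 := hpos (x + t • y)
      simp only [add_dotProduct, dotProduct_add, mulVec_add, mulVec_smul, smul_dotProduct,
        dotProduct_smul, smul_eq_mul] at h0
      rw [hsym y x] at h0
      have hring : (x ⬝ᵥ M *ᵥ x) + t * (x ⬝ᵥ M *ᵥ y) + t * ((x ⬝ᵥ M *ᵥ y) + t * (y ⬝ᵥ M *ᵥ y))
          = (y ⬝ᵥ M *ᵥ y) * (t * t) + (2 * (x ⬝ᵥ M *ᵥ y)) * t + (x ⬝ᵥ M *ᵥ x) := by ring
      linarith [h0, hring.le, hring.ge]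
    have hd := discrim_le_zero hq
    rw [discrim] at hd
    nlinarith [hd]
  intro s s' hs hs'
  obtain ⟨hw, hwpos, hzpos, hcomp⟩ := hlcp s hs
  obtain ⟨hw', hwpos', hzpos', hcomp'⟩ := hlcp s' hs'
  set e : Fin d → ℝ := (-(s - s')) • c + (z s - z s') with he
  have hu : w s - w s' = M *ᵥ e := by
    rw [he, mulVec_add, mulVec_smul, hc, mulVec_sub, hw, hw']
    module
  have huv : (w s - w s') ⬝ᵥ (z s - z s') ≤ 0 := by
    have h1 : 0 ≤ w s ⬝ᵥ z s' := dotProduct_nonneg_of_nonneg hwpos hzpos'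
    have h2 : 0 ≤ w s' ⬝ᵥ z s := dotProduct_nonneg_of_nonneg hwpos' hzpos
    simp only [sub_dotProduct, dotProduct_sub, hcomp, hcomp']
    linarith
  refine ⟨⟨e, hu.symm⟩, ?_⟩
  -- abbreviations
  set a : ℝ := e ⬝ᵥ M *ᵥ e with ha
  set b : ℝ := c ⬝ᵥ M *ᵥ c with hb
  have haeq : (w s - w s') ⬝ᵥ Mdag *ᵥ (w s - w s') = a := by
    rw [hu, hkey]
  have hbeq : r ⬝ᵥ Mdag *ᵥ r = b := by
    rw [← hc, hkey]
  -- a ≤ -(s-s') * (e ⬝ M c)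
  set t : ℝ := e ⬝ᵥ M *ᵥ c with ht
  have hstep : a ≤ -(s - s') * t := by
    have h1 : a = e ⬝ᵥ (w s - w s') := by rw [hu]
    have h2 : e ⬝ᵥ (w s - w s') = (-(s - s')) * (e ⬝ᵥ r) + e ⬝ᵥ (M *ᵥ (z s - z s')) := by
      have : w s - w s' = (-(s - s')) • r + M *ᵥ (z s - z s') := by
        rw [mulVec_sub, hw, hw']; module
      rw [this, dotProduct_add, dotProduct_smul, smul_eq_mul]
    have h3 : e ⬝ᵥ (M *ᵥ (z s - z s')) = (w s - w s') ⬝ᵥ (z s - z s') := by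
      rw [hsym, ← hu, dotProduct_comm]
    have h4 : e ⬝ᵥ r = t := by rw [← hc]
    rw [h1, h2, h3, h4]
    linarith
  have hcst : t ^ 2 ≤ a * b := hcs e c
  have ha0 : 0 ≤ a := hpos e
  have hb0 : 0 ≤ b := hpos c
  rw [haeq, hbeq]
  -- conclude: sqrt a ≤ |s - s'| * sqrt b
  rcases eq_or_lt_of_le ha0 with hA | hA
  · rw [← hA, Real.sqrt_zero]
    positivity
  · have habs : a ≤ |s - s'| * |t| := by
      calc a ≤ -(s - s') * t := hstep
        _ ≤ |(-(s - s')) * t| := le_abs_self _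
        _ = |s - s'| * |t| := by rw [abs_mul, abs_neg]
    have h5 : a ^ 2 ≤ (s - s') ^ 2 * (a * b) := by
      have : a ^ 2 ≤ (|s - s'| * |t|) ^ 2 := by
        have := habs
        nlinarith [abs_nonneg (s - s'), abs_nonneg t, ha0]
      calc a ^ 2 ≤ (|s - s'| * |t|) ^ 2 := this
        _ = (s - s') ^ 2 * t ^ 2 := by rw [mul_pow, sq_abs, sq_abs]
        _ ≤ (s - s') ^ 2 * (a * b) := by nlinarith [sq_nonneg (s - s')]
    have h6 : a ≤ (s - s') ^ 2 * b := by
      nlinarith [h5, hA]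
    calc Real.sqrt a ≤ Real.sqrt ((s - s') ^ 2 * b) := Real.sqrt_le_sqrt h6
      _ = |s - s'| * Real.sqrt b := by
          rw [Real.sqrt_mul (sq_nonneg _), Real.sqrt_sq_eq_abs]
end

section
/- Let $M \in \mathbb{R}^{d\times d}$ be positive semidefinite. There exist $\varepsilon_0 > 0$ (depending on $\alpha \in \mathbb{R}^d$ with all coordinates nonzero) and $C > 0$ (depending on $d$ and $M$) such that for all $0 < \varepsilon \leq \varepsilon_0$ and all $y = Mu$ with $u \geq 0$, the minimizer $x(y)$ of $D(x, \varepsilon\alpha^2)$ over $\{x \geq 0 : Mx = y\}$ satisfies $\|x(y)\| \leq C(1 + \|y\|^2)$. -/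
open Matrix

/-- Euclidean norm on `Fin n → ℝ`. -/
noncomputable def enorm {n : ℕ} (x : Fin n → ℝ) : ℝ := Real.sqrt (∑ i, x i ^ 2)

/-- Bregman divergence of the entropy mirror map. -/
noncomputable def breg {n : ℕ} (x y : Fin n → ℝ) : ℝ :=
  (1/4) * ∑ i, (x i * Real.log (x i / y i) - x i + y i)

lemma enorm_nonneg' {n : ℕ} (x : Fin n → ℝ) : 0 ≤ _root_.enorm x := Real.sqrt_nonneg _

lemma abs_le_enorm {n : ℕ} (x : Fin n → ℝ) (i : Fin n) : |x i| ≤ _root_.enorm x := by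
  rw [← Real.sqrt_sq_eq_abs]
  exact Real.sqrt_le_sqrt (by
    have : x i ^ 2 ≤ ∑ j, x j ^ 2 :=
      Finset.single_le_sum (fun j _ => sq_nonneg (x j)) (Finset.mem_univ i)
    simpa using this)

lemma l1 (t : ℝ) (ht : 0 ≤ t) : t - 1 ≤ t * Real.log t := by
  rcases eq_or_lt_of_le ht with h | h
  · simp [← h]
  · have h2 := Real.log_le_sub_one_of_pos (inv_pos.mpr h)
    rw [Real.log_inv] at h2
    have h4 : t * t⁻¹ = 1 := mul_inv_cancel₀ (ne_of_gt h)
    nlinarith [mul_le_mul_of_nonneg_left h2 ht]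

lemma l2 (t : ℝ) (ht : 0 ≤ t) : t * Real.log t ≤ t * t := by
  rcases eq_or_lt_of_le ht with h | h
  · simp [← h]
  · have h2 := Real.log_le_sub_one_of_pos h
    nlinarith

lemma l3 (t c : ℝ) (ht : 0 ≤ t) (hc : 0 < c) :
    t * Real.log (t / c) = t * Real.log t - t * Real.log c := by
  rcases eq_or_lt_of_le ht with h | h
  · simp [← h]
  · rw [Real.log_div (ne_of_gt h) (ne_of_gt hc), mul_sub]

lemma mulVec_eq_sum_col {d : ℕ} (M : Matrix (Fin d) (Fin d) ℝ) (v : Fin d → ℝ) :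
    M.mulVec v = ∑ j, v j • (fun r => M r j) := by
  ext i
  simp [Matrix.mulVec, dotProduct, Finset.sum_apply, mul_comm]

lemma carath {d : ℕ} (M : Matrix (Fin d) (Fin d) ℝ) :
    ∀ n : ℕ, ∀ u : Fin d → ℝ, 0 ≤ u →
    (Finset.univ.filter fun i => u i ≠ 0).card ≤ n →
    ∃ v : Fin d → ℝ, 0 ≤ v ∧ M.mulVec v = M.mulVec u ∧
      LinearIndependent ℝ
        (fun i : (Finset.univ.filter fun i => v i ≠ 0 : Finset (Fin d)) =>
          (fun r => M r (i : Fin d))) := by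
  intro n
  induction n with
  | zero =>
    intro u hu hcard
    have hempty : (Finset.univ.filter fun i => u i ≠ 0) = ∅ :=
      Finset.card_eq_zero.mp (Nat.le_zero.mp hcard)
    refine ⟨u, hu, rfl, ?_⟩
    haveI : IsEmpty ((Finset.univ.filter fun i => u i ≠ 0 : Finset (Fin d)) : Type) := by
      rw [hempty]; exact Finset.isEmpty_coe_sort.mpr rfl
    exact linearIndependent_empty_type
  | succ n ih =>
    intro u hu hcard
    by_cases hind : LinearIndependent ℝ
        (fun i : (Finset.univ.filter fun i => u i ≠ 0 : Finset (Fin d)) =>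
          (fun r => M r (i : Fin d)))
    · exact ⟨u, hu, rfl, hind⟩
    · have key : ∀ z : Fin d → ℝ, M.mulVec z = 0 →
          (∀ i, u i = 0 → z i = 0) → (∃ i, 0 < z i) →
          ∃ v : Fin d → ℝ, 0 ≤ v ∧ M.mulVec v = M.mulVec u ∧
            LinearIndependent ℝ
              (fun i : (Finset.univ.filter fun i => v i ≠ 0 : Finset (Fin d)) =>
                (fun r => M r (i : Fin d))) := by
        rintro z hz hzsupp ⟨i₂, hi₂⟩
        have hTne : (Finset.univ.filter (fun i => 0 < z i)).Nonempty := ⟨i₂, by simp [hi₂]⟩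
        obtain ⟨i₀, hi₀T, hi₀⟩ := Finset.exists_mem_eq_inf'
          hTne (fun i => u i / z i)
        set t : ℝ := (Finset.univ.filter (fun i => 0 < z i)).inf' hTne (fun i => u i / z i)
          with ht
        have hzi₀ : 0 < z i₀ := by simpa using hi₀T
        have htval : t = u i₀ / z i₀ := hi₀
        have htnn : 0 ≤ t := by
          rw [htval]; exact div_nonneg (hu i₀) hzi₀.le
        set v : Fin d → ℝ := fun i => u i - t * z i with hv
        have hvnn : 0 ≤ v := by
          intro i
          have hui : (0:ℝ) ≤ u i := hu i
          show (0:ℝ) ≤ u i - t * z i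
          rcases le_or_gt (z i) 0 with h | h
          · have : t * z i ≤ 0 := mul_nonpos_of_nonneg_of_nonpos htnn h
            linarith
          · have h1 : t ≤ u i / z i := Finset.inf'_le _ (by simp [h])
            have := (le_div_iff₀ h).mp h1
            linarith
        have hveq : M.mulVec v = M.mulVec u := by
          have hvu : v = u - t • z := by funext i; simp [hv, smul_eq_mul]
          rw [hvu, Matrix.mulVec_sub, Matrix.mulVec_smul, hz]
          simp
        have hvi₀ : v i₀ = 0 := by
          show u i₀ - t * z i₀ = 0
          rw [htval]
          field_simp
          ring
        have hsub : (Finset.univ.filter fun i => v i ≠ 0) ⊂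
            (Finset.univ.filter fun i => u i ≠ 0) := by
          constructor
          · intro i hi
            simp only [Finset.mem_filter, Finset.mem_univ, true_and] at hi ⊢
            intro hui
            exact hi (by show u i - t * z i = 0; rw [hui, hzsupp i hui]; ring)
          · intro hsup
            have hi₀u : i₀ ∈ (Finset.univ.filter fun i => u i ≠ 0) := by
              simp only [Finset.mem_filter, Finset.mem_univ, true_and]
              intro hui
              exact absurd (hzsupp i₀ hui) (ne_of_gt hzi₀)
            have := hsup hi₀u
            simp only [Finset.mem_filter, Finset.mem_univ, true_and] at this
            exact this hvi₀
        have hcard' : (Finset.univ.filter fun i => v i ≠ 0).card ≤ n := by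
          have := Finset.card_lt_card hsub
          omega
        obtain ⟨w, hw1, hw2, hw3⟩ := ih v hvnn hcard'
        exact ⟨w, hw1, hw2.trans hveq, hw3⟩
      obtain ⟨g, hg0, i₁, hi₁⟩ := Fintype.not_linearIndependent_iff.mp hind
      set z : Fin d → ℝ :=
        fun i => if h : i ∈ (Finset.univ.filter fun i => u i ≠ 0) then g ⟨i, h⟩ else 0 with hzdef
      have hzsupp : ∀ i, u i = 0 → z i = 0 := by
        intro i hui
        have hni : i ∉ (Finset.univ.filter fun i => u i ≠ 0) := by simp [hui]
        simp only [hzdef]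
        exact dif_neg hni
      have hzi₁ : z (i₁ : Fin d) = g i₁ := by
        simp only [hzdef]
        rw [dif_pos (Finset.coe_mem i₁), Subtype.coe_eta]
      have hzM : M.mulVec z = 0 := by
        rw [mulVec_eq_sum_col]
        rw [← Finset.sum_filter_add_sum_filter_not Finset.univ
          (fun i => i ∈ (Finset.univ.filter fun i => u i ≠ 0))]
        have h2 : ∑ j ∈ Finset.univ.filter
            (fun i => ¬ i ∈ (Finset.univ.filter fun i => u i ≠ 0)),
            z j • (fun r => M r j) = 0 := by
          apply Finset.sum_eq_zero
          intro j hj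
          simp only [Finset.mem_filter, Finset.mem_univ, true_and, not_and, not_not,
            ne_eq] at hj
          rw [hzsupp j (by tauto), zero_smul]
        rw [h2, add_zero]
        have h3 : (Finset.univ.filter (fun i => i ∈ (Finset.univ.filter fun i => u i ≠ 0)))
            = (Finset.univ.filter fun i => u i ≠ 0) := by
          ext i; simp
        rw [h3]
        rw [← Finset.sum_attach (Finset.univ.filter fun i => u i ≠ 0)
          (fun j => z j • (fun r => M r j))]
        rw [← hg0]
        apply Finset.sum_congr rfl
        intro i _
        simp only [hzdef]
        rw [dif_pos i.2, Subtype.coe_eta]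
      rcases lt_or_gt_of_ne (hzi₁ ▸ hi₁ : z (i₁ : Fin d) ≠ 0) with h | h
      · exact key (-z) (by rw [Matrix.mulVec_neg, hzM, neg_zero])
          (fun i hi => by simp [hzsupp i hi]) ⟨i₁, by simpa using h⟩
      · exact key z hzM hzsupp ⟨i₁, h⟩

lemma bound_per_support {d : ℕ} (M : Matrix (Fin d) (Fin d) ℝ) (S : Finset (Fin d)) :
    ∃ c : ℝ, 0 ≤ c ∧ ∀ v : Fin d → ℝ, (∀ i, i ∉ S → v i = 0) →
      LinearIndependent ℝ (fun i : S => (fun r => M r (i : Fin d))) →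
      ∀ i, |v i| ≤ c * _root_.enorm (M.mulVec v) := by

  by_cases hQ : LinearIndependent ℝ (fun i : S => (fun r => M r (i : Fin d)))
  · -- the submodule of vectors supported in S
    set V : Submodule ℝ (Fin d → ℝ) :=
      { carrier := {v | ∀ i, i ∉ S → v i = 0}
        add_mem' := by intro a b ha hb i hi; simp [ha i hi, hb i hi]
        zero_mem' := by intro i _; rfl
        smul_mem' := by intro r a ha i hi; simp [ha i hi] } with hV
    set f : V →ₗ[ℝ] (Fin d → ℝ) := M.mulVecLin.comp V.subtype with hf
    have hinj : Function.Injective f := by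
      rw [← LinearMap.ker_eq_bot]
      rw [LinearMap.ker_eq_bot']
      intro ⟨v, hv⟩ hfv
      have hfv' : M.mulVec v = 0 := hfv
      rw [mulVec_eq_sum_col] at hfv'
      have hsplit : ∑ j, v j • (fun r => M r j) = ∑ j ∈ S, v j • (fun r => M r j) := by
        rw [← Finset.sum_subset (Finset.subset_univ S)]
        intro j _ hj
        rw [hv j hj, zero_smul]
      have hsum : ∑ j : S, v (j : Fin d) • (fun r => M r (j : Fin d)) = 0 := by
        rw [Finset.sum_coe_sort S (fun j => v j • (fun r => M r j))]
        rw [← hsplit, hfv']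
      have := Fintype.linearIndependent_iff.mp hQ (fun j : S => v (j : Fin d)) hsum
      ext1
      funext i
      by_cases hi : i ∈ S
      · exact this ⟨i, hi⟩
      · exact hv i hi
    set e := LinearEquiv.ofInjective f hinj with he
    set G := LinearMap.toContinuousLinearMap (e.symm.toLinearMap) with hG
    refine ⟨‖G‖, G.opNorm_nonneg, ?_⟩
    intro v hsupp _ i
    set w : V := ⟨v, hsupp⟩ with hw
    have h1 : e.symm ⟨f w, LinearMap.mem_range_self f w⟩ = w := by
      apply e.injective
      simp [he]
      rfl
    have h2 : ‖w‖ ≤ ‖G‖ * ‖M.mulVec v‖ := by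
      have h3 := G.le_opNorm ⟨f w, LinearMap.mem_range_self f w⟩
      have h4 : ‖(⟨f w, LinearMap.mem_range_self f w⟩ : LinearMap.range f)‖ = ‖M.mulVec v‖ := rfl
      have h5 : (G ⟨f w, LinearMap.mem_range_self f w⟩ : V) = w := h1
      rw [h4, h5] at h3
      exact h3
    calc |v i| = ‖v i‖ := (Real.norm_eq_abs _).symm
      _ ≤ ‖v‖ := norm_le_pi_norm v i
      _ = ‖w‖ := rfl
      _ ≤ ‖G‖ * ‖M.mulVec v‖ := h2
      _ ≤ ‖G‖ * _root_.enorm (M.mulVec v) := by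
          apply mul_le_mul_of_nonneg_left _ G.opNorm_nonneg
          rw [pi_norm_le_iff_of_nonneg (enorm_nonneg' _)]
          intro j
          rw [Real.norm_eq_abs]
          exact abs_le_enorm _ j
  · exact ⟨0, le_refl _, fun v _ h => absurd h hQ⟩

lemma feasible_bound {d : ℕ} (M : Matrix (Fin d) (Fin d) ℝ) :
    ∃ K > (0:ℝ), ∀ u : Fin d → ℝ, 0 ≤ u →
      ∃ v : Fin d → ℝ, 0 ≤ v ∧ M.mulVec v = M.mulVec u ∧
        ∀ i, v i ≤ K * _root_.enorm (M.mulVec u) := by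

  choose cf hcf0 hcf using bound_per_support M
  have hsum : (0:ℝ) ≤ ∑ S : Finset (Fin d), cf S :=
    Finset.sum_nonneg (fun S _ => hcf0 S)
  refine ⟨1 + ∑ S : Finset (Fin d), cf S, by linarith, ?_⟩
  intro u hu
  obtain ⟨v, hv0, hveq, hind⟩ := carath M (Finset.univ.filter fun i => u i ≠ 0).card u hu le_rfl
  refine ⟨v, hv0, hveq, fun i => ?_⟩
  have hsupp : ∀ j, j ∉ (Finset.univ.filter fun i => v i ≠ 0) → v j = 0 := by
    intro j hj
    simpa using hj
  have h := hcf _ v hsupp hind i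
  have h2 : cf (Finset.univ.filter fun i => v i ≠ 0) ≤ 1 + ∑ S : Finset (Fin d), cf S := by
    have := Finset.single_le_sum (fun S _ => hcf0 S)
      (Finset.mem_univ (Finset.univ.filter fun i => v i ≠ 0))
    linarith
  calc v i ≤ |v i| := le_abs_self _
    _ ≤ cf _ * _root_.enorm (M.mulVec v) := h
    _ ≤ (1 + ∑ S : Finset (Fin d), cf S) * _root_.enorm (M.mulVec v) :=
        mul_le_mul_of_nonneg_right h2 (enorm_nonneg' _)
    _ = (1 + ∑ S : Finset (Fin d), cf S) * _root_.enorm (M.mulVec u) := by rw [hveq]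

set_option maxHeartbeats 1000000 in
/-- The constrained Bregman projection `x(y) = argmin {D(x, εα²) : x ≥ 0, Mx = y}` for
`y = Mu`, `u ≥ 0`, satisfies `‖x(y)‖ ≤ C(1 + ‖y‖²)` for all small enough `ε`. -/
theorem stmt_12 {d : ℕ} (M : Matrix (Fin d) (Fin d) ℝ) (hM : M.PosSemidef)
    (α : Fin d → ℝ) (hα : ∀ i, α i ≠ 0) :
    ∃ ε₀ > (0:ℝ), ∃ C > (0:ℝ), ∀ ε : ℝ, 0 < ε → ε ≤ ε₀ →
      ∀ u : Fin d → ℝ, 0 ≤ u →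
        ∀ x : Fin d → ℝ, 0 ≤ x → M.mulVec x = M.mulVec u →
          (∀ x' : Fin d → ℝ, 0 ≤ x' → M.mulVec x' = M.mulVec u →
            breg x (fun i => ε * (α i) ^ 2) ≤ breg x' (fun i => ε * (α i) ^ 2)) →
          _root_.enorm x ≤ C * (1 + _root_.enorm (M.mulVec u) ^ 2) := by
  obtain ⟨K, hK, hKb⟩ := feasible_bound M
  set A : ℝ := ∑ i, |Real.log (α i ^ 2)| with hA
  have hA0 : 0 ≤ A := Finset.sum_nonneg (fun i _ => abs_nonneg _)
  have hC0 : (0:ℝ) < 3*(d:ℝ)*K + (d:ℝ)*K^2/2 + (d:ℝ)/2 + 1 := by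
    have h1 : 0 ≤ 3*(d:ℝ)*K := by
      have : (0:ℝ) ≤ (d:ℝ) := Nat.cast_nonneg d
      nlinarith
    have h2 : 0 ≤ (d:ℝ)*K^2/2 := by
      have : (0:ℝ) ≤ (d:ℝ) := Nat.cast_nonneg d
      nlinarith [sq_nonneg K]
    have h3 : 0 ≤ (d:ℝ)/2 := by positivity
    linarith
  refine ⟨Real.exp (-(2*A + 2)), Real.exp_pos _,
    3*(d:ℝ)*K + (d:ℝ)*K^2/2 + (d:ℝ)/2 + 1, hC0, ?_⟩
  intro ε hε hεle u hu x hx hMx hmin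
  obtain ⟨v, hv0, hveq, hvb⟩ := hKb u hu
  set Ny : ℝ := _root_.enorm (M.mulVec u) with hNy
  have hNy0 : 0 ≤ Ny := enorm_nonneg' _
  set L : ℝ := -Real.log ε with hL
  have hLge : 2*A + 2 ≤ L := by
    have := (Real.log_le_iff_le_exp hε).mpr hεle
    simp only [hL]
    linarith
  -- expansion of the objective
  have hcpos : ∀ i, (0:ℝ) < ε * α i ^ 2 := fun i =>
    mul_pos hε (lt_of_le_of_ne (sq_nonneg (α i)) (Ne.symm (pow_ne_zero 2 (hα i))))
  have hexp : ∀ w : Fin d → ℝ, 0 ≤ w →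
      ∑ i, (w i * Real.log (w i / (ε * α i ^ 2)) - w i + ε * α i ^ 2)
      = (∑ i, (w i * Real.log (w i) - w i)) + L * (∑ i, w i)
        - (∑ i, w i * Real.log (α i ^ 2)) + ε * ∑ i, α i ^ 2 := by
    intro w hw
    have step : ∀ i ∈ Finset.univ,
        w i * Real.log (w i / (ε * α i ^ 2)) - w i + ε * α i ^ 2
        = ((w i * Real.log (w i) - w i) + L * w i) - w i * Real.log (α i ^ 2)
          + ε * α i ^ 2 := by
      intro i _
      rw [l3 (w i) (ε * α i ^ 2) (hw i) (hcpos i),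
        Real.log_mul (ne_of_gt hε) (pow_ne_zero 2 (hα i))]
      simp only [hL]
      ring
    rw [Finset.sum_congr rfl step, Finset.sum_add_distrib, Finset.sum_sub_distrib,
      Finset.sum_add_distrib, ← Finset.mul_sum, ← Finset.mul_sum]
  -- comparison with v
  have hcomp := hmin v hv0 hveq
  rw [breg, breg] at hcomp
  have hSle : ∑ i, (x i * Real.log (x i / (ε * α i ^ 2)) - x i + ε * α i ^ 2)
      ≤ ∑ i, (v i * Real.log (v i / (ε * α i ^ 2)) - v i + ε * α i ^ 2) := by
    linarith
  rw [hexp x hx, hexp v hv0] at hSle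
  set X : ℝ := ∑ i, x i with hX
  set V : ℝ := ∑ i, v i with hV
  have hX0 : 0 ≤ X := Finset.sum_nonneg (fun i _ => hx i)
  have hV0 : 0 ≤ V := Finset.sum_nonneg (fun i _ => hv0 i)
  -- elementary bounds
  have hF1 : -(d:ℝ) ≤ ∑ i, (x i * Real.log (x i) - x i) := by
    have h1 : ∀ i ∈ Finset.univ, (-1:ℝ) ≤ x i * Real.log (x i) - x i := by
      intro i _
      have := l1 (x i) (hx i)
      linarith
    have h2 := Finset.sum_le_sum h1
    simp only [Finset.sum_const, Finset.card_univ, Fintype.card_fin, nsmul_eq_mul,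
      mul_neg, mul_one] at h2
    linarith
  have hF2 : ∑ i, (v i * Real.log (v i) - v i) ≤ ∑ i, v i * v i := by
    apply Finset.sum_le_sum
    intro i _
    have h1 := l2 (v i) (hv0 i)
    have h2 : (0:ℝ) ≤ v i := hv0 i
    linarith
  have habs : ∀ (w : Fin d → ℝ), 0 ≤ w →
      |∑ i, w i * Real.log (α i ^ 2)| ≤ (∑ i, w i) * A := by
    intro w hw
    have hWi : ∀ i, w i ≤ ∑ j, w j := fun i =>
      Finset.single_le_sum (fun j _ => hw j) (Finset.mem_univ i)
    have hW0 : 0 ≤ ∑ j, w j := Finset.sum_nonneg (fun j _ => hw j)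
    calc |∑ i, w i * Real.log (α i ^ 2)| ≤ ∑ i, |w i * Real.log (α i ^ 2)| :=
          Finset.abs_sum_le_sum_abs _ _
      _ ≤ ∑ i, (∑ j, w j) * |Real.log (α i ^ 2)| := by
          apply Finset.sum_le_sum
          intro i _
          rw [abs_mul, abs_of_nonneg (hw i)]
          exact mul_le_mul_of_nonneg_right (hWi i) (abs_nonneg _)
      _ = (∑ j, w j) * A := by rw [hA, ← Finset.mul_sum]
  have hxl := abs_le.mp (habs x hx)
  have hvl := abs_le.mp (habs v hv0)
  -- key scalar inequality
  have hkey : (L - A) * X ≤ (L + A) * V + ((∑ i, v i * v i) + (d:ℝ)) := by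
    nlinarith [hSle, hF1, hF2, hxl.2, hvl.1]
  have hB0 : (0:ℝ) ≤ (∑ i, v i * v i) + (d:ℝ) := by
    have : (0:ℝ) ≤ ∑ i, v i * v i :=
      Finset.sum_nonneg (fun i _ => mul_nonneg (hv0 i) (hv0 i))
    have : (0:ℝ) ≤ (d:ℝ) := Nat.cast_nonneg d
    linarith [Finset.sum_nonneg (fun i (_ : i ∈ Finset.univ) => mul_nonneg (hv0 i) (hv0 i))]
  have hLA : (0:ℝ) < L - A := by linarith
  have hX3 : X ≤ 3*V + ((∑ i, v i * v i) + (d:ℝ))/2 := by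
    have h1 : (L - A) * X ≤ (L - A) * (3*V + ((∑ i, v i * v i) + (d:ℝ))/2) := by
      nlinarith [mul_nonneg (show (0:ℝ) ≤ 2*L - 4*A by linarith) hV0,
        mul_nonneg (show (0:ℝ) ≤ L - A - 2 by linarith) hB0]
    exact le_of_mul_le_mul_left h1 hLA
  -- bounds on V and ∑ v²
  have hKNy : 0 ≤ K * Ny := mul_nonneg hK.le hNy0
  have hVb : V ≤ (d:ℝ) * (K * Ny) := by
    have h1 : ∀ i ∈ Finset.univ, v i ≤ K * Ny := fun i _ => hvb i
    have h2 := Finset.sum_le_sum h1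
    simpa [Finset.sum_const, Finset.card_univ, Fintype.card_fin, nsmul_eq_mul] using h2
  have hV2b : ∑ i, v i * v i ≤ (d:ℝ) * ((K * Ny) * (K * Ny)) := by
    have h1 : ∀ i ∈ Finset.univ, v i * v i ≤ (K * Ny) * (K * Ny) := by
      intro i _
      exact mul_le_mul (hvb i) (hvb i) (hv0 i) hKNy
    have h2 := Finset.sum_le_sum h1
    simpa [Finset.sum_const, Finset.card_univ, Fintype.card_fin, nsmul_eq_mul] using h2
  -- from sum bound to norm bound
  have henx : _root_.enorm x ≤ X := by
    rw [_root_.enorm]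
    calc Real.sqrt (∑ i, x i ^ 2) ≤ Real.sqrt (X ^ 2) :=
          Real.sqrt_le_sqrt (Finset.sum_sq_le_sq_sum_of_nonneg (fun i _ => hx i))
      _ = X := Real.sqrt_sq hX0
  have hdnn : (0:ℝ) ≤ (d:ℝ) := Nat.cast_nonneg d
  calc _root_.enorm x ≤ X := henx
    _ ≤ 3*V + ((∑ i, v i * v i) + (d:ℝ))/2 := hX3
    _ ≤ 3*((d:ℝ) * (K * Ny)) + ((d:ℝ) * ((K * Ny) * (K * Ny)) + (d:ℝ))/2 := by linarith
    _ ≤ (3*(d:ℝ)*K + (d:ℝ)*K^2/2 + (d:ℝ)/2 + 1) * (1 + Ny ^ 2) := by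
        nlinarith [mul_nonneg (mul_nonneg hdnn hK.le) (sq_nonneg (Ny - 1)),
          mul_nonneg hdnn (sq_nonneg K), sq_nonneg Ny, hNy0, hK.le]
end

section
/- Let $M$ be positive semidefinite, $r \in \mathrm{span}(M)$. For $s \geq 0$ let $(w(s), z(s))$ solve the parametric LCP $w(s) = -sr + \mathbf{1} + Mz(s)$, $w(s) \geq 0$, $z(s) \geq 0$, $\langle w(s), z(s)\rangle = 0$, and assume $s \mapsto z(s)$ is coordinatewise nondecreasing. Then there exists $C > 0$ depending on $d, M, r$ such that for all $0 \leq s_1 \leq s_2$: $\|z(s_2) - z(s_1)\|_1 \leq C(1 + s_1 + s_2)|s_2 - s_1|$. In particular $z$ is Lipschitz on compact subsets of $[0,\infty)$. -/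
open Matrix

private lemma psd_cs {d : ℕ} {M : Matrix (Fin d) (Fin d) ℝ} (hM : M.PosSemidef)
    (x y : Fin d → ℝ) :
    x ⬝ᵥ M.mulVec y ≤ Real.sqrt (x ⬝ᵥ M.mulVec x) * Real.sqrt (y ⬝ᵥ M.mulVec y) := by
  have hQ : ∀ v : Fin d → ℝ, 0 ≤ v ⬝ᵥ M.mulVec v := fun v => by simpa using hM.dotProduct_mulVec_nonneg v
  have hsym : ∀ u v : Fin d → ℝ, u ⬝ᵥ M.mulVec v = v ⬝ᵥ M.mulVec u := by
    intro u v
    have hMℝ : Mᵀ = M := hM.1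
    rw [Matrix.dotProduct_mulVec, ← Matrix.mulVec_transpose, hMℝ, dotProduct_comm]
  -- quadratic in t : Q y * t² + 2 B x y * t + Q x ≥ 0
  have hquad : ∀ t : ℝ,
      0 ≤ (y ⬝ᵥ M.mulVec y) * (t * t) + (2 * (x ⬝ᵥ M.mulVec y)) * t + (x ⬝ᵥ M.mulVec x) := by
    intro t
    have h := hQ (x + t • y)
    have : (x + t • y) ⬝ᵥ M.mulVec (x + t • y)
        = (y ⬝ᵥ M.mulVec y) * (t * t) + (2 * (x ⬝ᵥ M.mulVec y)) * t + (x ⬝ᵥ M.mulVec x) := by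
      rw [Matrix.mulVec_add, Matrix.mulVec_smul]
      simp [dotProduct_add, add_dotProduct, dotProduct_smul, smul_dotProduct, hsym y x]
      ring
    linarith [this ▸ h]
  have hd := discrim_le_zero hquad
  rw [discrim] at hd
  have hsq : (x ⬝ᵥ M.mulVec y) ^ 2 ≤ (x ⬝ᵥ M.mulVec x) * (y ⬝ᵥ M.mulVec y) := by nlinarith
  calc x ⬝ᵥ M.mulVec y ≤ |x ⬝ᵥ M.mulVec y| := le_abs_self _
    _ = Real.sqrt ((x ⬝ᵥ M.mulVec y) ^ 2) := (Real.sqrt_sq_eq_abs _).symm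
    _ ≤ Real.sqrt ((x ⬝ᵥ M.mulVec x) * (y ⬝ᵥ M.mulVec y)) := Real.sqrt_le_sqrt hsq
    _ = _ := Real.sqrt_mul (hQ x) _

/-- Under monotonicity of `z`, the solution of the parametric LCP satisfies a quantitative
local Lipschitz bound in `‖·‖₁`. -/
theorem stmt_14 {d : ℕ} (M : Matrix (Fin d) (Fin d) ℝ) (hM : M.PosSemidef)
    (r : Fin d → ℝ) (hr : ∃ c, M.mulVec c = r)
    (w z : ℝ → Fin d → ℝ)
    (hlcp : ∀ s : ℝ, 0 ≤ s →
      w s = -(s • r) + 1 + M.mulVec (z s) ∧ 0 ≤ w s ∧ 0 ≤ z s ∧ w s ⬝ᵥ z s = 0)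
    (hmono : ∀ i, MonotoneOn (fun s => z s i) (Set.Ici (0 : ℝ))) :
    ∃ C > (0:ℝ), ∀ s₁ s₂ : ℝ, 0 ≤ s₁ → s₁ ≤ s₂ →
      ∑ i, |z s₂ i - z s₁ i| ≤ C * (1 + s₁ + s₂) * (s₂ - s₁) := by
  obtain ⟨c, hc⟩ := hr
  have hQ : ∀ v : Fin d → ℝ, 0 ≤ v ⬝ᵥ M.mulVec v := fun v => by simpa using hM.dotProduct_mulVec_nonneg v
  have hsym : ∀ u v : Fin d → ℝ, u ⬝ᵥ M.mulVec v = v ⬝ᵥ M.mulVec u := by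
    intro u v
    have hMℝ : Mᵀ = M := hM.1
    rw [Matrix.dotProduct_mulVec, ← Matrix.mulVec_transpose, hMℝ, dotProduct_comm]
  set K : ℝ := Real.sqrt (c ⬝ᵥ M.mulVec c) with hK
  have hK0 : 0 ≤ K := Real.sqrt_nonneg _
  refine ⟨2 * K ^ 2 + 1, by positivity, ?_⟩
  intro s₁ s₂ hs₁ h12
  have hs₂ : (0:ℝ) ≤ s₂ := le_trans hs₁ h12
  obtain ⟨he₁, hw₁, hz₁, ho₁⟩ := hlcp s₁ hs₁
  obtain ⟨he₂, hw₂, hz₂, ho₂⟩ := hlcp s₂ hs₂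
  set δ : ℝ := s₂ - s₁ with hδ
  have hδ0 : 0 ≤ δ := by simp [hδ]; linarith
  set Δ : Fin d → ℝ := z s₂ - z s₁ with hΔ
  have hΔ0 : 0 ≤ Δ := by
    intro i
    have := hmono i hs₁ hs₂ h12
    simp [hΔ]
    exact this
  -- dot products of nonneg vectors are nonneg
  have dpn : ∀ u v : Fin d → ℝ, 0 ≤ u → 0 ≤ v → 0 ≤ u ⬝ᵥ v := by
    intro u v hu hv
    exact Finset.sum_nonneg fun i _ => mul_nonneg (hu i) (hv i)
  -- key: Q Δ ≤ δ * (c ⬝ᵥ M Δ)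
  have hstep1 : Δ ⬝ᵥ M.mulVec Δ ≤ δ * (c ⬝ᵥ M.mulVec Δ) := by
    have hwd : (w s₂ - w s₁) = -(δ • r) + M.mulVec Δ := by
      rw [he₁, he₂, hΔ, Matrix.mulVec_sub]
      ext i
      simp [hδ]
      ring
    have hneg : (w s₂ - w s₁) ⬝ᵥ Δ ≤ 0 := by
      have h1 : (w s₂ - w s₁) ⬝ᵥ Δ
          = -(w s₂ ⬝ᵥ z s₁) - (w s₁ ⬝ᵥ z s₂) := by
        simp [hΔ, sub_dotProduct, dotProduct_sub, ho₁, ho₂]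
        ring
      have := dpn _ _ hw₂ hz₁
      have := dpn _ _ hw₁ hz₂
      linarith [h1 ▸ (le_refl ((w s₂ - w s₁) ⬝ᵥ Δ))]
    have h2 : (w s₂ - w s₁) ⬝ᵥ Δ = -(δ * (r ⬝ᵥ Δ)) + Δ ⬝ᵥ M.mulVec Δ := by
      rw [hwd]
      simp [add_dotProduct, neg_dotProduct, smul_dotProduct]
      rw [dotProduct_comm]
    have h3 : r ⬝ᵥ Δ = c ⬝ᵥ M.mulVec Δ := by
      rw [← hc, hsym c Δ]; exact dotProduct_comm _ _
    rw [h2, h3] at hneg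
    linarith
  -- √Q bounds
  have sqrt_bound : ∀ (v : Fin d → ℝ) (a : ℝ), 0 ≤ a →
      v ⬝ᵥ M.mulVec v ≤ a * (c ⬝ᵥ M.mulVec v) →
      Real.sqrt (v ⬝ᵥ M.mulVec v) ≤ a * K := by
    intro v a ha h
    have hcs := psd_cs hM c v
    have hq := hQ v
    have h2 : v ⬝ᵥ M.mulVec v ≤ a * K * Real.sqrt (v ⬝ᵥ M.mulVec v) := by
      calc v ⬝ᵥ M.mulVec v ≤ a * (c ⬝ᵥ M.mulVec v) := h
        _ ≤ a * (K * Real.sqrt (v ⬝ᵥ M.mulVec v)) := by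
            exact mul_le_mul_of_nonneg_left hcs ha
        _ = a * K * Real.sqrt (v ⬝ᵥ M.mulVec v) := by ring
    have hvq : Real.sqrt (v ⬝ᵥ M.mulVec v) * Real.sqrt (v ⬝ᵥ M.mulVec v)
        = v ⬝ᵥ M.mulVec v := Real.mul_self_sqrt hq
    have haK : 0 ≤ a * K := mul_nonneg ha hK0
    nlinarith [Real.sqrt_nonneg (v ⬝ᵥ M.mulVec v)]
  have hΔq : Real.sqrt (Δ ⬝ᵥ M.mulVec Δ) ≤ δ * K := sqrt_bound Δ δ hδ0 hstep1
  -- bound on z s₂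
  have hz2q : Real.sqrt (z s₂ ⬝ᵥ M.mulVec (z s₂)) ≤ s₂ * K := by
    apply sqrt_bound _ _ hs₂
    have h0 : (0:ℝ) = -(s₂ * (r ⬝ᵥ z s₂)) + (1 ⬝ᵥ z s₂) + z s₂ ⬝ᵥ M.mulVec (z s₂) := by
      have := ho₂
      rw [he₂] at this
      simp [add_dotProduct, neg_dotProduct, smul_dotProduct] at this
      rw [dotProduct_comm (M.mulVec (z s₂))] at this
      linarith [this]
    have h1 : (0:ℝ) ≤ 1 ⬝ᵥ z s₂ := dpn _ _ (fun i => by norm_num) hz₂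
    have h3 : r ⬝ᵥ z s₂ = c ⬝ᵥ M.mulVec (z s₂) := by
      rw [← hc, hsym c (z s₂)]; exact dotProduct_comm _ _
    rw [h3] at h0
    linarith
  -- main estimate
  have hsum : ∑ i, |z s₂ i - z s₁ i| = (1:Fin d → ℝ) ⬝ᵥ Δ := by
    simp only [dotProduct, Pi.one_apply, one_mul]
    refine Finset.sum_congr rfl fun i _ => ?_
    have h := hΔ0 i
    simp only [hΔ, Pi.sub_apply, Pi.zero_apply] at h ⊢
    exact abs_of_nonneg (by linarith)
  have hmain : (1:Fin d → ℝ) ⬝ᵥ Δ ≤ 2 * K ^ 2 * s₂ * δ := by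
    have hone : (1:Fin d → ℝ) = w s₂ + s₂ • r - M.mulVec (z s₂) := by
      rw [he₂]; ext i; simp; ring
    have hexp : (1:Fin d → ℝ) ⬝ᵥ Δ
        = w s₂ ⬝ᵥ Δ + s₂ * (r ⬝ᵥ Δ) - (z s₂) ⬝ᵥ M.mulVec Δ := by
      rw [hone]
      simp only [sub_dotProduct, add_dotProduct, smul_dotProduct, smul_eq_mul]
      rw [dotProduct_comm (M.mulVec (z s₂)) Δ, hsym Δ (z s₂)]
    have t1 : w s₂ ⬝ᵥ Δ ≤ 0 := by
      have : w s₂ ⬝ᵥ Δ = -(w s₂ ⬝ᵥ z s₁) := by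
        simp [hΔ, dotProduct_sub, ho₂]
      rw [this]
      simpa using dpn _ _ hw₂ hz₁
    have t2 : s₂ * (r ⬝ᵥ Δ) ≤ s₂ * (δ * K ^ 2) := by
      apply mul_le_mul_of_nonneg_left _ hs₂
      have h3 : r ⬝ᵥ Δ = c ⬝ᵥ M.mulVec Δ := by
        rw [← hc, hsym c Δ]; exact dotProduct_comm _ _
      calc r ⬝ᵥ Δ = c ⬝ᵥ M.mulVec Δ := h3
        _ ≤ K * Real.sqrt (Δ ⬝ᵥ M.mulVec Δ) := psd_cs hM c Δ
        _ ≤ K * (δ * K) := mul_le_mul_of_nonneg_left hΔq hK0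
        _ = δ * K ^ 2 := by ring
    have t3 : -((z s₂) ⬝ᵥ M.mulVec Δ) ≤ s₂ * K * (δ * K) := by
      have hcs := psd_cs hM (-(z s₂)) Δ
      have hQneg : (-(z s₂)) ⬝ᵥ M.mulVec (-(z s₂)) = z s₂ ⬝ᵥ M.mulVec (z s₂) := by
        rw [Matrix.mulVec_neg]
        simp
      rw [hQneg] at hcs
      have h4 : (-(z s₂)) ⬝ᵥ Matrix.mulVec M Δ = -((z s₂) ⬝ᵥ M.mulVec Δ) := by
        simp [neg_dotProduct]
      rw [h4] at hcs
      calc -((z s₂) ⬝ᵥ M.mulVec Δ)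
          ≤ Real.sqrt (z s₂ ⬝ᵥ M.mulVec (z s₂)) * Real.sqrt (Δ ⬝ᵥ M.mulVec Δ) := hcs
        _ ≤ (s₂ * K) * (δ * K) := by
            apply mul_le_mul hz2q hΔq (Real.sqrt_nonneg _)
            positivity
    nlinarith [hexp, t1, t2, t3]
  rw [hsum]
  have hfin : 2 * K ^ 2 * s₂ * δ ≤ (2 * K ^ 2 + 1) * (1 + s₁ + s₂) * δ := by
    apply mul_le_mul_of_nonneg_right _ hδ0
    nlinarith [sq_nonneg K]
  calc (1:Fin d → ℝ) ⬝ᵥ Δ ≤ 2 * K ^ 2 * s₂ * δ := hmain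
    _ ≤ (2 * K ^ 2 + 1) * (1 + s₁ + s₂) * δ := hfin
    _ = (2 * K ^ 2 + 1) * (1 + s₁ + s₂) * (s₂ - s₁) := by rw [hδ]
end

section
/- Let $M$ be positive semidefinite, $\ell(x) = \frac12\langle x,Mx\rangle - \langle r,x\rangle$ with $r\in\mathrm{span}(M)$, and let $x^\varepsilon(t) > 0$ solve $\frac{dx}{dt} = -4\, x\circ\nabla\ell(x)$ with $x^\varepsilon(0) = \varepsilon\alpha^2$, all $\alpha_i \neq 0$. Then for every $t \geq 0$, $x^\varepsilon(t)$ is the unique minimizer of $D(x, x^\varepsilon(0))$ over $\{x \geq 0 : Mx = Mx^\varepsilon(t)\}$, where $D(x,y) = \frac14\sum_i(x_i\log\frac{x_i}{y_i} - x_i + y_i)$ (with $0\log 0 = 0$). -/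
open Matrix

lemma pt_nonneg (a b : ℝ) (ha : 0 ≤ a) (hb : 0 < b) :
    0 ≤ a * Real.log (a / b) - a + b := by
  rcases eq_or_lt_of_le ha with h | h
  · simp [← h]; linarith
  · have h1 : Real.log (b / a) ≤ b / a - 1 := Real.log_le_sub_one_of_pos (by positivity)
    have h2 : Real.log (a / b) = - Real.log (b / a) := by
      rw [Real.log_div hb.ne' h.ne', Real.log_div h.ne' hb.ne']; ring
    rw [h2]
    have h3 := mul_le_mul_of_nonneg_left h1 ha
    have hba : a * (b / a) = b := by field_simp
    nlinarith

lemma pt_pos (a b : ℝ) (ha : 0 ≤ a) (hb : 0 < b) (hne : a ≠ b) :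
    0 < a * Real.log (a / b) - a + b := by
  rcases eq_or_lt_of_le ha with h | h
  · simp [← h]; linarith
  · have hx : b / a ≠ 1 := by
      intro hh
      exact hne ((div_eq_one_iff_eq h.ne').mp hh).symm
    have h1 : Real.log (b / a) < b / a - 1 := Real.log_lt_sub_one_of_pos (by positivity) hx
    have h2 : Real.log (a / b) = - Real.log (b / a) := by
      rw [Real.log_div hb.ne' h.ne', Real.log_div h.ne' hb.ne']; ring
    rw [h2]
    have h3 := mul_lt_mul_of_pos_left h1 h
    have hba : a * (b / a) = b := by field_simp
    nlinarith

lemma per_index (a b c : ℝ) (ha : 0 ≤ a) (hb : 0 < b) (hc : 0 < c) :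
    (a * Real.log (a / c) - a + c) - (b * Real.log (b / c) - b + c)
      - (a * Real.log (a / b) - a + b)
      = (a - b) * (Real.log b - Real.log c) := by
  rcases eq_or_lt_of_le ha with h | h
  · rw [← h, Real.log_div hb.ne' hc.ne']
    ring
  · rw [Real.log_div h.ne' hc.ne', Real.log_div h.ne' hb.ne',
      Real.log_div hb.ne' hc.ne']
    ring

lemma dot_mulVec_zero {d : ℕ} (M : Matrix (Fin d) (Fin d) ℝ)
    (hsym : ∀ i j, M i j = M j i) (v w : Fin d → ℝ) (hv : M.mulVec v = 0) :
    ∑ i, v i * M.mulVec w i = 0 := by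
  have h : ∑ i, v i * M.mulVec w i = ∑ j, w j * M.mulVec v j := by
    simp only [Matrix.mulVec, dotProduct, Finset.mul_sum]
    rw [Finset.sum_comm]
    refine Finset.sum_congr rfl fun j _ => Finset.sum_congr rfl fun i _ => ?_
    rw [hsym i j]; ring
  rw [h, hv]
  simp

/-- Along the flow `dx/dt = -4 x ∘ ∇ℓ(x)` with `ℓ(x) = ½⟨x,Mx⟩ - ⟨r,x⟩` started at `εα²`,
the point `x(t)` is the unique minimizer of `D(·, x(0))` over `{x' ≥ 0 : Mx' = Mx(t)}`. -/
theorem stmt_19 {d : ℕ} (M : Matrix (Fin d) (Fin d) ℝ) (hM : M.PosSemidef)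
    (r : Fin d → ℝ) (hr : ∃ u, M.mulVec u = r)
    (α : Fin d → ℝ) (hα : ∀ i, α i ≠ 0) (ε : ℝ) (hε : 0 < ε)
    (x : ℝ → Fin d → ℝ) (hx0 : x 0 = fun i => ε * (α i) ^ 2)
    (hpos : ∀ t i, 0 < x t i)
    (hode : ∀ t : ℝ, ∀ i,
      HasDerivAt (fun t => x t i) (-4 * x t i * (M.mulVec (x t) i - r i)) t) :
    ∀ t : ℝ, 0 ≤ t → ∀ x' : Fin d → ℝ, 0 ≤ x' → M.mulVec x' = M.mulVec (x t) →
      breg (x t) (x 0) ≤ breg x' (x 0) ∧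
      (x' ≠ x t → breg (x t) (x 0) < breg x' (x 0)) := by
  have hsym : ∀ i j, M i j = M j i := by
    intro i j
    simpa using hM.1.apply j i
  intro t ht x' hx' hMx'
  set v : Fin d → ℝ := fun i => x' i - x t i with hv
  have hMv : M.mulVec v = 0 := by
    have h : M.mulVec (x' - x t) = M.mulVec x' - M.mulVec (x t) :=
      Matrix.mulVec_sub M x' (x t)
    show M.mulVec (x' - x t) = 0
    rw [h, hMx', sub_self]
  -- orthogonality: ∑ v i * log (x t i) = ∑ v i * log (x 0 i)
  have key : ∑ i, v i * Real.log (x t i) = ∑ i, v i * Real.log (x 0 i) := by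
    set g : ℝ → ℝ := fun s => ∑ i, v i * Real.log (x s i) with hg
    have hder : ∀ s : ℝ, HasDerivAt g 0 s := by
      intro s
      have h1 : ∀ i ∈ Finset.univ, HasDerivAt (fun s => v i * Real.log (x s i))
          (v i * (-4 * (M.mulVec (x s) i - r i))) s := by
        intro i _
        have h := ((hode s i).log (hpos s i).ne').const_mul (v i)
        rw [show -4 * x s i * (M.mulVec (x s) i - r i) / x s i = -4 * (M.mulVec (x s) i - r i) by
          rw [mul_comm (-4 : ℝ) (x s i), mul_assoc, mul_div_cancel_left₀ _ (hpos s i).ne']] at h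
        exact h
      have h2 := HasDerivAt.fun_sum h1
      have h3 : ∑ i, v i * (-4 * (M.mulVec (x s) i - r i)) = 0 := by
        obtain ⟨u, hu⟩ := hr
        have e1 : ∑ i, v i * M.mulVec (x s) i = 0 :=
          dot_mulVec_zero M hsym v (x s) hMv
        have e2 : ∑ i, v i * r i = 0 := by
          rw [← hu]; exact dot_mulVec_zero M hsym v u hMv
        have h4 : ∑ i, v i * (-4 * (M.mulVec (x s) i - r i))
            = -4 * ((∑ i, v i * M.mulVec (x s) i) - ∑ i, v i * r i) := by
          rw [mul_sub, Finset.mul_sum, Finset.mul_sum, ← Finset.sum_sub_distrib]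
          exact Finset.sum_congr rfl fun i _ => by ring
        rw [h4, e1, e2]; ring
      rw [h3] at h2
      exact h2
    exact is_const_of_deriv_eq_zero (fun s => (hder s).differentiableAt)
      (fun s => (hder s).deriv) t 0
  -- three-point identity
  have hthree : breg x' (x 0) - breg (x t) (x 0) = breg x' (x t) := by
    have hzero : ∑ i, (x' i - x t i) * (Real.log (x t i) - Real.log (x 0 i)) = 0 := by
      have h : ∑ i, (x' i - x t i) * (Real.log (x t i) - Real.log (x 0 i))
          = (∑ i, v i * Real.log (x t i)) - ∑ i, v i * Real.log (x 0 i) := by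
        rw [← Finset.sum_sub_distrib]
        exact Finset.sum_congr rfl fun i _ => by simp only [hv]; ring
      rw [h, key, sub_self]
    unfold breg
    have hsum : ∑ i, (x' i * Real.log (x' i / x 0 i) - x' i + x 0 i)
        - ∑ i, (x t i * Real.log (x t i / x 0 i) - x t i + x 0 i)
        - ∑ i, (x' i * Real.log (x' i / x t i) - x' i + x t i) = 0 := by
      rw [← Finset.sum_sub_distrib, ← Finset.sum_sub_distrib]
      rw [Finset.sum_congr rfl fun i _ =>
        per_index (x' i) (x t i) (x 0 i) (hx' i) (hpos t i) (hpos 0 i)]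
      exact hzero
    linarith
  -- nonnegativity of breg x' (x t)
  have hnn : 0 ≤ breg x' (x t) := by
    unfold breg
    have h : 0 ≤ ∑ i, (x' i * Real.log (x' i / x t i) - x' i + x t i) :=
      Finset.sum_nonneg fun i _ => pt_nonneg (x' i) (x t i) (hx' i) (hpos t i)
    linarith
  constructor
  · linarith
  · intro hne
    have hpos' : 0 < breg x' (x t) := by
      obtain ⟨i, hi⟩ := Function.ne_iff.mp hne
      unfold breg
      have h : 0 < ∑ i, (x' i * Real.log (x' i / x t i) - x' i + x t i) := by
        refine Finset.sum_pos' (fun j _ => pt_nonneg (x' j) (x t j) (hx' j) (hpos t j))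
          ⟨i, Finset.mem_univ i, pt_pos (x' i) (x t i) (hx' i) (hpos t i) hi⟩
      linarith
    linarith
end
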